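/- Let (G,D,⋆) be a probabilistic metric space with ⋆ continuous (with respect to weak convergence on Δ⁺). Then every probabilistic 1-Lipschitz map f : G → Δ⁺ is probabilistically continuous: whenever D(z_n, z) converges weakly to H₀, f(z_n) converges weakly to f(z). -/

import Mathlib

open Filter Topology

noncomputable section

/-- `Δ⁺`: distribution functions `F : [-∞,∞] → [0,1]`, nondecreasing, left-continuous
on `ℝ`, with `F(-∞)=0`, `F(+∞)=1` and `F(0)=0`. -/
def IsDistFun (F : EReal → ℝ) : Prop :=
  Monotone F ∧ (∀ t, F t ∈ Set.Icc (0:ℝ) 1) ∧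
  (∀ x : ℝ, ContinuousWithinAt F (Set.Iio (x : EReal)) (x : EReal)) ∧
  F ⊥ = 0 ∧ F ⊤ = 1 ∧ F (0 : EReal) = 0

/-- The step function `H_a`. -/
def Hstep (a : ℝ) : EReal → ℝ := fun t => if t ≤ (a : EReal) then 0 else 1

/-- `H₀`. -/
def H0 : EReal → ℝ := Hstep 0

/-- `H_∞`. -/
def Hinf : EReal → ℝ := fun t => if t = ⊤ then 1 else 0

/-- The condition `A(F,G;h)` : for all `t ∈ (0,1/h)`, `G(t) ≤ F(t+h)+h`. -/
def levyCond (F G : EReal → ℝ) (h : ℝ) : Prop :=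
  ∀ t : ℝ, 0 < t → t < 1 / h → G (t : EReal) ≤ F ((t + h : ℝ) : EReal) + h

def levySet (F G : EReal → ℝ) : Set ℝ :=
  {h : ℝ | 0 < h ∧ h ≤ 1 ∧ levyCond F G h ∧ levyCond G F h}

/-- The modified Lévy distance. -/
def dL (F G : EReal → ℝ) : ℝ := sInf (levySet F G)

/-- Weak convergence: pointwise convergence at each (real) continuity point of the limit. -/
def WeakConv (F : ℕ → EReal → ℝ) (G : EReal → ℝ) : Prop :=
  ∀ t : ℝ, ContinuousAt G (t : EReal) →
    Tendsto (fun n => F n (t : EReal)) atTop (𝓝 (G (t : EReal)))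

abbrev TriOp := (EReal → ℝ) → (EReal → ℝ) → (EReal → ℝ)

/-- A triangle function on `Δ⁺`. -/
def IsTriangleFn (star : TriOp) : Prop :=
  (∀ F L, IsDistFun F → IsDistFun L → IsDistFun (star F L)) ∧
  (∀ F L, IsDistFun F → IsDistFun L → star F L = star L F) ∧
  (∀ F L K, IsDistFun F → IsDistFun L → IsDistFun K →
    star F (star L K) = star (star F L) K) ∧
  (∀ F, IsDistFun F → star F H0 = F) ∧
  (∀ F L K, IsDistFun F → IsDistFun L → IsDistFun K → F ≤ L → star F K ≤ star L K)

/-- `⋆` is continuous with respect to weak convergence. -/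
def StarContinuous (star : TriOp) : Prop :=
  ∀ (Fn Ln : ℕ → EReal → ℝ) (F L : EReal → ℝ),
    (∀ n, IsDistFun (Fn n)) → (∀ n, IsDistFun (Ln n)) →
    IsDistFun F → IsDistFun L →
    WeakConv Fn F → WeakConv Ln L →
    WeakConv (fun n => star (Fn n) (Ln n)) (star F L)

/-- `⋆` is sup-continuous. -/
def StarSupContinuous (star : TriOp) : Prop :=
  ∀ (I : Type) (_ : Nonempty I) (F : I → EReal → ℝ) (L : EReal → ℝ),
    (∀ i, IsDistFun (F i)) → IsDistFun L →
    (fun t => ⨆ i, star (F i) L t) = star (fun t => ⨆ i, F i t) L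

/-- A probabilistic metric space `(G, D, ⋆)`. -/
structure PMSpace (G : Type) where
  star : TriOp
  D : G → G → EReal → ℝ
  star_tri : IsTriangleFn star
  D_mem : ∀ p q, IsDistFun (D p q)
  D_eq_iff : ∀ p q, D p q = H0 ↔ p = q
  D_symm : ∀ p q, D p q = D q p
  D_tri : ∀ p q r, star (D p q) (D q r) ≤ D p r

/-- Probabilistic 1-Lipschitz map. -/
def PLip {G : Type} (M : PMSpace G) (f : G → EReal → ℝ) : Prop :=
  (∀ x, IsDistFun (f x)) ∧ ∀ x y, M.star (M.D x y) (f y) ≤ f x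

/-- Probabilistically continuous map. -/
def PCont {G : Type} (M : PMSpace G) (f : G → EReal → ℝ) : Prop :=
  (∀ x, IsDistFun (f x)) ∧
  ∀ (z : G) (zn : ℕ → G),
    WeakConv (fun n => M.D (zn n) z) H0 →
    WeakConv (fun n => f (zn n)) (f z)

/-- The uniform modified Lévy distance `d_∞`. -/
def dInf {G : Type} (f g : G → EReal → ℝ) : ℝ := ⨆ x, dL (f x) (g x)

/-- Probabilistic Cauchy sequence: `D(z_n,z_p)(t) → H₀(t)` for all real `t`. -/
def PCauchy {G : Type} (M : PMSpace G) (z : ℕ → G) : Prop :=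
  ∀ t : ℝ, Tendsto (fun np : ℕ × ℕ => M.D (z np.1) (z np.2) (t : EReal))
    atTop (𝓝 (H0 (t : EReal)))

def PConvTo {G : Type} (M : PMSpace G) (z : ℕ → G) (w : G) : Prop :=
  ∀ t : ℝ, Tendsto (fun n => M.D (z n) w (t : EReal)) atTop (𝓝 (H0 (t : EReal)))

def PComplete {G : Type} (M : PMSpace G) : Prop :=
  ∀ z : ℕ → G, PCauchy M z → ∃ w, PConvTo M z w

/-- Compactness: complete and every strong `t`-neighborhood cover has a finite subcover. -/
def PCompact {G : Type} (M : PMSpace G) : Prop :=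
  PComplete M ∧ ∀ t : ℝ, 0 < t → ∃ A : Finset G, ∀ x : G, ∃ a ∈ A, M.D a x (t : EReal) > 1 - t

lemma isDistFun_H0 : IsDistFun H0 := by
  refine ⟨?_, ?_, ?_, ?_, ?_, ?_⟩
  · intro a b hab
    simp only [H0, Hstep]
    by_cases h2 : b ≤ ((0:ℝ):EReal)
    · rw [if_pos (hab.trans h2), if_pos h2]
    · rw [if_neg h2]
      split_ifs <;> norm_num
  · intro t; simp only [H0, Hstep]; split_ifs <;> norm_num
  · intro x
    by_cases hx : (0:ℝ) < x
    · have : ∀ᶠ y in 𝓝[Set.Iio (x:EReal)] (x:EReal), H0 y = H0 x := by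
        have h0x : ((0:ℝ):EReal) < (x:EReal) := by exact_mod_cast hx
        filter_upwards [nhdsWithin_le_nhds (Ioi_mem_nhds h0x)] with y hy
        simp only [H0, Hstep, if_neg (not_le.2 (show ((0:ℝ):EReal) < y from hy)), if_neg (not_le.2 h0x)]
      exact (tendsto_congr' this).2 tendsto_const_nhds
    · have hx' : (x:EReal) ≤ ((0:ℝ):EReal) := by exact_mod_cast not_lt.1 hx
      have : ∀ᶠ y in 𝓝[Set.Iio (x:EReal)] (x:EReal), H0 y = H0 x := by
        filter_upwards [self_mem_nhdsWithin] with y hy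
        have h1 : y ≤ ((0:ℝ):EReal) := le_of_lt (lt_of_lt_of_le hy hx')
        simp only [H0, Hstep, if_pos h1, if_pos hx']
      exact (tendsto_congr' this).2 tendsto_const_nhds
  · simp [H0, Hstep]
  · simp [H0, Hstep]
  · simp [H0, Hstep]

lemma weakConv_const (F : EReal → ℝ) : WeakConv (fun _ => F) F :=
  fun _ _ => tendsto_const_nhds

lemma weakConv_subseq {Fn : ℕ → EReal → ℝ} {F : EReal → ℝ} {σ : ℕ → ℕ}
    (h : WeakConv Fn F) (hσ : Tendsto σ atTop atTop) :
    WeakConv (fun n => Fn (σ n)) F :=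
  fun t ht => (h t ht).comp hσ

lemma countable_discont {F : EReal → ℝ} (hF : IsDistFun F) :
    Set.Countable {s : ℝ | ¬ ContinuousAt F (s : EReal)} := by
  have hmono : Monotone (fun s : ℝ => F (s : EReal)) := fun a b hab =>
    hF.1 (by exact_mod_cast hab)
  apply hmono.countable_not_continuousAt.mono
  intro s hs
  simp only [Set.mem_setOf_eq] at hs ⊢
  intro hc
  have hc' : ContinuousAt (F ∘ (fun s : ℝ => (s : EReal))) s := hc
  exact hs (EReal.isOpenEmbedding_coe.continuousAt_iff.1 hc')


lemma helly (fn : ℕ → EReal → ℝ) (hfn : ∀ n, IsDistFun (fn n)) :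
    ∃ φ : ℕ → ℕ, StrictMono φ ∧ ∃ G : EReal → ℝ, IsDistFun G ∧
      WeakConv (fun n => fn (φ n)) G := by
  classical
  set u : ℕ → (ℚ → Set.Icc (0:ℝ) 1) := fun n q => ⟨fn n ((q:ℝ):EReal), (hfn n).2.1 _⟩ with hu
  obtain ⟨g, φ, hφ, hconv⟩ := CompactSpace.tendsto_subseq u
  have hg : ∀ q : ℚ, Tendsto (fun n => fn (φ n) ((q:ℝ):EReal)) atTop (𝓝 (g q : ℝ)) := by
    intro q
    exact (continuous_subtype_val.tendsto _).comp ((tendsto_pi_nhds.1 hconv) q)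
  have hg0 : ∀ q : ℚ, (0:ℝ) ≤ g q := fun q => (g q).2.1
  have hg1 : ∀ q : ℚ, (g q : ℝ) ≤ 1 := fun q => (g q).2.2
  set S : EReal → Set ℝ := fun x => (fun q : ℚ => (g q : ℝ)) '' {q : ℚ | ((q:ℝ):EReal) < x} with hS
  set G : EReal → ℝ := fun x => if x = ⊤ then 1 else sSup (S x) with hG
  have hSbdd : ∀ x, BddAbove (S x) := by
    intro x; refine ⟨1, ?_⟩; rintro r ⟨q, -, rfl⟩; exact hg1 q
  have hSne : ∀ x : ℝ, (S (x:EReal)).Nonempty := by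
    intro x
    obtain ⟨q, hq⟩ := exists_rat_lt x
    exact ⟨g q, ⟨q, by exact_mod_cast hq, rfl⟩⟩
  have hGle1 : ∀ x, G x ≤ 1 := by
    intro x
    rw [hG]; dsimp only
    split_ifs with h
    · exact le_refl 1
    · exact Real.sSup_le (by rintro r ⟨q, -, rfl⟩; exact hg1 q) zero_le_one
  have hG0le : ∀ x, 0 ≤ G x := by
    intro x
    rw [hG]; dsimp only
    split_ifs with h
    · exact zero_le_one
    · exact Real.sSup_nonneg (by rintro r ⟨q, -, rfl⟩; exact hg0 q)
  have hGreal : ∀ x : ℝ, G (x:EReal) = sSup (S (x:EReal)) := by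
    intro x
    rw [hG]; dsimp only
    rw [if_neg (by simp)]
  have hmem_le : ∀ (q : ℚ) (x : ℝ), ((q:ℝ):EReal) < (x:EReal) → (g q : ℝ) ≤ G x := by
    intro q x hqx
    rw [hGreal]
    exact le_csSup (hSbdd _) ⟨q, hqx, rfl⟩
  have hGmono : Monotone G := by
    intro x y hxy
    by_cases hy : y = ⊤
    · rw [hy]; exact (hGle1 x).trans_eq (by rw [hG]; simp)
    · have hx : x ≠ ⊤ := fun h => hy (top_le_iff.1 (h ▸ hxy))
      rw [hG]; dsimp only
      rw [if_neg hx, if_neg hy]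
      refine Real.sSup_le ?_ (Real.sSup_nonneg (by rintro r ⟨q, -, rfl⟩; exact hg0 q))
      rintro r ⟨q, hq, rfl⟩
      exact le_csSup (hSbdd _) ⟨q, lt_of_lt_of_le hq hxy, rfl⟩
  have hGbot : G ⊥ = 0 := by
    rw [hG]; dsimp only
    rw [if_neg (by simp)]
    have : S ⊥ = ∅ := by
      ext r; simp only [hS, Set.mem_image, Set.mem_setOf_eq, Set.mem_empty_iff_false, iff_false]
      rintro ⟨q, hq, -⟩
      exact (not_lt_bot hq)
    rw [this, Real.sSup_empty]
  have hGzero : G (0:EReal) = 0 := by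
    have h0 : ((0:ℝ):EReal) = (0:EReal) := by norm_num
    rw [← h0, hGreal]
    refine le_antisymm (Real.sSup_le ?_ le_rfl)
      (Real.sSup_nonneg (by rintro r ⟨q, -, rfl⟩; exact hg0 q))
    rintro r ⟨q, hq, rfl⟩
    have hq' : ((q:ℝ):EReal) ≤ (0:EReal) := by
      rw [← h0]; exact le_of_lt hq
    refine le_of_tendsto (hg q) (Eventually.of_forall fun n => ?_)
    calc fn (φ n) ((q:ℝ):EReal) ≤ fn (φ n) (0:EReal) := (hfn (φ n)).1 hq'
    _ = 0 := (hfn (φ n)).2.2.2.2.2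
  -- left continuity
  have hGleft : ∀ x : ℝ, ContinuousWithinAt G (Set.Iio (x:EReal)) (x:EReal) := by
    intro x
    rw [ContinuousWithinAt, Metric.tendsto_nhds]
    intro ε hε
    have hlt : G (x:EReal) - ε < sSup (S (x:EReal)) := by
      rw [hGreal]; linarith
    obtain ⟨r, hrS, hrgt⟩ := exists_lt_of_lt_csSup (hSne x) hlt
    obtain ⟨q0, hq0x, rfl⟩ := hrS
    have hmem : Set.Ioi ((q0:ℝ):EReal) ∈ 𝓝[Set.Iio (x:EReal)] (x:EReal) :=
      nhdsWithin_le_nhds (Ioi_mem_nhds hq0x)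
    filter_upwards [hmem, self_mem_nhdsWithin] with y hy1 hy2
    have hyle : G y ≤ G (x:EReal) := hGmono (le_of_lt hy2)
    have hyge : (g q0 : ℝ) ≤ G y := by
      have hytop : y ≠ ⊤ := ne_top_of_lt hy2
      rw [hG]; dsimp only; rw [if_neg hytop]
      exact le_csSup (hSbdd _) ⟨q0, hy1, rfl⟩
    rw [Real.dist_eq, abs_lt]
    constructor <;> linarith
  have hGdist : IsDistFun G := by
    refine ⟨hGmono, fun t => ⟨hG0le t, hGle1 t⟩, hGleft, hGbot, ?_, hGzero⟩
    rw [hG]; simp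
  refine ⟨φ, hφ, G, hGdist, ?_⟩
  -- weak convergence
  intro t hct
  rw [Metric.tendsto_atTop]
  intro ε hε
  -- lower bound witness
  have hlt : G (t:EReal) - ε/2 < sSup (S (t:EReal)) := by rw [hGreal]; linarith
  obtain ⟨r, hrS, hrgt⟩ := exists_lt_of_lt_csSup (hSne t) hlt
  obtain ⟨q0, hq0t, rfl⟩ := hrS
  -- upper bound: right continuity at t
  have hU : {s : ℝ | G (s:EReal) < G (t:EReal) + ε/2} ∈ 𝓝 t := by
    have h1 : Set.Iio (G (t:EReal) + ε/2) ∈ 𝓝 (G (t:EReal)) := Iio_mem_nhds (by linarith)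
    have h2 : G ⁻¹' Set.Iio (G (t:EReal) + ε/2) ∈ 𝓝 (t:EReal) := hct h1
    have h3 := (continuous_coe_real_ereal.continuousAt (x := t)).preimage_mem_nhds h2
    convert h3 using 1
    rfl
  obtain ⟨δ, hδ, hball⟩ := Metric.mem_nhds_iff.1 hU
  obtain ⟨q1, hq1a, hq1b⟩ := exists_rat_btwn (show t < t + δ/2 by linarith)
  have hq1ball : G ((q1:ℝ):EReal) < G (t:EReal) + ε/2 := by
    apply hball
    rw [Metric.mem_ball, Real.dist_eq, abs_lt]
    constructor <;> linarith
  have hgq1 : (g q1 : ℝ) < G (t:EReal) + ε/2 := by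
    obtain ⟨q2, hq2a, hq2b⟩ := exists_rat_btwn hq1b
    have h1 : (g q1 : ℝ) ≤ G ((q2:ℝ):EReal) := hmem_le q1 q2 (by exact_mod_cast hq2a)
    have h2 : G ((q2:ℝ):EReal) < G (t:EReal) + ε/2 := by
      apply hball
      rw [Metric.mem_ball, Real.dist_eq, abs_lt]
      constructor <;> linarith
    linarith
  obtain ⟨N0, hN0⟩ := Metric.tendsto_atTop.1 (hg q0) (ε/2) (by linarith)
  obtain ⟨N1, hN1⟩ := Metric.tendsto_atTop.1 (hg q1) (ε/2) (by linarith)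
  refine ⟨max N0 N1, fun n hn => ?_⟩
  have h0 := hN0 n (le_trans (le_max_left _ _) hn)
  have h1 := hN1 n (le_trans (le_max_right _ _) hn)
  rw [Real.dist_eq, abs_lt] at h0 h1
  have hlow : fn (φ n) ((q0:ℝ):EReal) ≤ fn (φ n) (t:EReal) :=
    (hfn (φ n)).1 (le_of_lt hq0t)
  have hhigh : fn (φ n) (t:EReal) ≤ fn (φ n) ((q1:ℝ):EReal) :=
    (hfn (φ n)).1 (by exact_mod_cast le_of_lt hq1a)
  have hq0G : (g q0 : ℝ) ≤ G (t:EReal) := by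
    rw [hGreal]; exact le_csSup (hSbdd _) ⟨q0, hq0t, rfl⟩
  rw [Real.dist_eq, abs_lt]
  constructor <;> [linarith; linarith]


lemma distfun_eq {F G : EReal → ℝ} (hF : IsDistFun F) (hG : IsDistFun G)
    (h : ∀ s : ℝ, ContinuousAt F (s:EReal) → ContinuousAt G (s:EReal) → F s = G s) :
    F = G := by
  set D : Set ℝ := {s | ContinuousAt F (s:EReal) ∧ ContinuousAt G (s:EReal)} with hD
  have hDc : Dᶜ.Countable := by
    apply ((countable_discont hF).union (countable_discont hG)).mono
    intro s hs
    simp only [hD, Set.mem_compl_iff, Set.mem_setOf_eq, not_and_or] at hs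
    exact hs
  have hdense : Dense D := by
    have := Set.Countable.dense_compl ℝ hDc
    rwa [compl_compl] at this
  funext x
  induction x using EReal.rec with
  | bot => rw [hF.2.2.2.1, hG.2.2.2.1]
  | top => rw [hF.2.2.2.2.1, hG.2.2.2.2.1]
  | coe x =>
    have hcl : x ∈ closure (Set.Iio x ∩ D) := by
      rw [mem_closure_iff]
      intro o ho hxo
      obtain ⟨δ, hδ, hball⟩ := Metric.isOpen_iff.1 ho x hxo
      have hopen : IsOpen (o ∩ Set.Iio x) := ho.inter isOpen_Iio
      have hne : (o ∩ Set.Iio x).Nonempty := by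
        refine ⟨x - δ/2, hball ?_, by simp only [Set.mem_Iio]; linarith⟩
        rw [Metric.mem_ball, Real.dist_eq, abs_lt]; constructor <;> linarith
      obtain ⟨y, hy⟩ := hdense.inter_open_nonempty _ hopen hne
      exact ⟨y, ⟨hy.1.1, hy.1.2, hy.2⟩⟩
    haveI hne : (𝓝[Set.Iio x ∩ D] x).NeBot := mem_closure_iff_nhdsWithin_neBot.1 hcl
    have hcoe : Tendsto (fun s : ℝ => (s : EReal)) (𝓝[Set.Iio x ∩ D] x)
        (𝓝[Set.Iio (x:EReal)] (x:EReal)) := by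
      refine ContinuousWithinAt.tendsto_nhdsWithin
        (continuous_coe_real_ereal.continuousWithinAt) ?_
      intro s hs
      have : (s:EReal) < (x:EReal) := by exact_mod_cast hs.1
      exact this
    have hFt : Tendsto (fun s : ℝ => F (s:EReal)) (𝓝[Set.Iio x ∩ D] x) (𝓝 (F (x:EReal))) :=
      Tendsto.comp (hF.2.2.1 x) hcoe
    have hGt : Tendsto (fun s : ℝ => G (s:EReal)) (𝓝[Set.Iio x ∩ D] x) (𝓝 (G (x:EReal))) :=
      Tendsto.comp (hG.2.2.1 x) hcoe
    have heq : (fun s : ℝ => F (s:EReal)) =ᶠ[𝓝[Set.Iio x ∩ D] x] fun s => G (s:EReal) := by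
      filter_upwards [self_mem_nhdsWithin] with s hs
      exact h s hs.2.1 hs.2.2
    exact tendsto_nhds_unique (hFt.congr' heq) hGt


/-- If `⋆` is continuous, every probabilistic 1-Lipschitz map is probabilistically
continuous. -/
theorem stmt10 {G : Type} (M : PMSpace G) (hc : StarContinuous M.star)
    (f : G → EReal → ℝ) (hf : PLip M f) : PCont M f := by
  obtain ⟨hf1, hf2⟩ := hf
  refine ⟨hf1, ?_⟩
  intro z zn hD
  intro t hct
  apply tendsto_of_subseq_tendsto
  intro ns hns
  obtain ⟨φ, hφ, K, hKd, hKconv⟩ := helly (fun n => f (zn (ns n))) (fun n => hf1 _)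
  have hσ : Tendsto (fun k => ns (φ k)) atTop atTop := hns.comp hφ.tendsto_atTop
  have hDsub : WeakConv (fun k => M.D (zn (ns (φ k))) z) H0 := weakConv_subseq hD hσ
  have hunit : ∀ L, IsDistFun L → M.star H0 L = L := by
    intro L hL
    rw [M.star_tri.2.1 H0 L isDistFun_H0 hL, M.star_tri.2.2.2.1 L hL]
  have hKf : K = f z := by
    apply distfun_eq hKd (hf1 z)
    intro s hcK hcF
    have hW1 : WeakConv (fun k => M.star (M.D (zn (ns (φ k))) z) (f z)) (M.star H0 (f z)) :=
      hc _ _ _ _ (fun k => M.D_mem _ _) (fun _ => hf1 z) isDistFun_H0 (hf1 z) hDsub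
        (weakConv_const _)
    rw [hunit (f z) (hf1 z)] at hW1
    have h1 : f z (s:EReal) ≤ K (s:EReal) := by
      refine le_of_tendsto_of_tendsto' (hW1 s hcF) (hKconv s hcK) fun k => ?_
      exact hf2 (zn (ns (φ k))) z (s:EReal)
    have hW2 : WeakConv (fun k => M.star (M.D (zn (ns (φ k))) z) (f (zn (ns (φ k)))))
        (M.star H0 K) :=
      hc _ _ _ _ (fun k => M.D_mem _ _) (fun k => hf1 _) isDistFun_H0 hKd hDsub hKconv
    rw [hunit K hKd] at hW2
    have h2 : K (s:EReal) ≤ f z (s:EReal) := by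
      refine le_of_tendsto (hW2 s hcK) (Eventually.of_forall fun k => ?_)
      have hle := hf2 z (zn (ns (φ k)))
      rw [M.D_symm z (zn (ns (φ k)))] at hle
      exact hle (s:EReal)
    exact le_antisymm h2 h1
  refine ⟨φ, ?_⟩
  rw [hKf] at hKconv
  exact hKconv t hct
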